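/- For 1 < p < q, the normalized incomplete beta ratio satisfies 1 < I_q(y)/I_p(y) < π_p/π_q for all y ∈ (0,1), where I_p(y) = (2/π_p)∫₀^y (1−t^p)^{-1/p} dt and π_p = 2π/(p sin(π/p)). -/

import Mathlib

open Real MeasureTheory Set

noncomputable def pip (p : ℝ) : ℝ := 2 * π / (p * Real.sin (π / p))

noncomputable def Ip (p y : ℝ) : ℝ :=
  (2 / pip p) * ∫ t in (0:ℝ)..y, (1 - t ^ p) ^ (-1 / p)

namespace Aux16

noncomputable def fB (p t : ℝ) : ℝ := (1 - t ^ p) ^ (-1 / p)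

lemma base_pos {p t : ℝ} (hp : 0 < p) (ht0 : 0 ≤ t) (ht1 : t < 1) : 0 < 1 - t ^ p := by
  have : t ^ p < 1 := Real.rpow_lt_one ht0 ht1 hp
  linarith

lemma base_nonneg {p t : ℝ} (hp : 0 < p) (ht0 : 0 ≤ t) (ht1 : t ≤ 1) : 0 ≤ 1 - t ^ p := by
  have : t ^ p ≤ 1 := Real.rpow_le_one ht0 ht1 hp.le
  linarith

lemma fB_pos {p t : ℝ} (hp : 0 < p) (ht0 : 0 ≤ t) (ht1 : t < 1) : 0 < fB p t :=
  Real.rpow_pos_of_pos (base_pos hp ht0 ht1) _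

lemma fB_nonneg {p t : ℝ} (hp : 0 < p) (ht0 : 0 ≤ t) (ht1 : t ≤ 1) : 0 ≤ fB p t :=
  Real.rpow_nonneg (base_nonneg hp ht0 ht1) _

lemma fB_one {p : ℝ} (hp : 0 < p) : fB p 1 = 0 := by
  simp [fB, Real.one_rpow, Real.zero_rpow (by positivity : -1/p ≠ 0)]

lemma cont_rpow {p : ℝ} (hp : 0 < p) : Continuous fun t : ℝ => t ^ p := by
  rw [continuous_iff_continuousAt]
  exact fun x => Real.continuousAt_rpow_const x p (Or.inr hp.le)

lemma fB_contOn {p b : ℝ} (hp : 0 < p) (hb : b < 1) : ContinuousOn (fB p) (Icc 0 b) := by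
  apply ContinuousOn.rpow_const (continuous_const.sub (cont_rpow hp)).continuousOn
  intro t ht
  exact Or.inl (base_pos hp ht.1 (lt_of_le_of_lt ht.2 hb)).ne'

lemma fB_intble {p a b : ℝ} (hp : 0 < p) (ha : 0 ≤ a) (hab : a ≤ b) (hb : b < 1) :
    IntervalIntegrable (fB p) volume a b := by
  apply ContinuousOn.intervalIntegrable
  rw [uIcc_of_le hab]
  exact (fB_contOn hp hb).mono (Icc_subset_Icc ha le_rfl)

lemma fB_meas (p : ℝ) : Measurable (fB p) := by unfold fB; fun_prop

lemma fB_intble_one {p y : ℝ} (hp : 1 < p) (hy0 : 0 ≤ y) (hy1 : y ≤ 1) :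
    IntervalIntegrable (fB p) volume y 1 := by
  have hp0 : 0 < p := lt_trans one_pos hp
  have hexp : (-1 : ℝ) < -1 / p := by
    rw [neg_div]
    have : 1 / p < 1 := by
      rw [div_lt_one hp0]; exact hp
    linarith
  have h1 : IntervalIntegrable (fun x : ℝ => x ^ (-1/p)) volume (1 - y) (1 - 1) :=
    intervalIntegral.intervalIntegrable_rpow' hexp
  have hmaj : IntervalIntegrable (fun t : ℝ => (1 - t) ^ (-1/p)) volume y 1 := by
    have := h1.comp_sub_left 1
    simpa using this
  apply hmaj.mono_fun' ((fB_meas p).aestronglyMeasurable)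
  filter_upwards [ae_restrict_mem measurableSet_uIoc] with t ht
  rw [uIoc_of_le hy1] at ht
  have ht0 : 0 ≤ t := le_trans hy0 ht.1.le
  have ht1 : t ≤ 1 := ht.2
  rw [Real.norm_of_nonneg (fB_nonneg hp0 ht0 ht1)]
  rcases eq_or_lt_of_le ht1 with h | h
  · rw [h, fB_one hp0, sub_self, Real.zero_rpow (by positivity : -1/p ≠ 0)]
  · have htp : t ^ p ≤ t := by
      rcases eq_or_lt_of_le ht0 with h0 | h0
      · rw [← h0, Real.zero_rpow hp0.ne']
      · simpa using Real.rpow_le_rpow_of_exponent_ge h0 ht1 hp.le (z := 1) |>.trans_eq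
          (Real.rpow_one t)
    have hb1 : 0 < 1 - t := by linarith
    have hb2 : 1 - t ≤ 1 - t ^ p := by linarith
    exact Real.rpow_le_rpow_of_nonpos hb1 hb2 (le_of_lt (div_neg_of_neg_of_pos (by norm_num) hp0))

lemma fB_lt {p q t : ℝ} (hp : 0 < p) (hpq : p < q) (ht0 : 0 < t) (ht1 : t < 1) :
    fB q t < fB p t := by
  have hq0 : 0 < q := lt_trans hp hpq
  have htq : t ^ q < t ^ p := Real.rpow_lt_rpow_of_exponent_gt ht0 ht1 hpq
  have h1 : 0 < 1 - t ^ p := base_pos hp ht0.le ht1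
  have h2 : 0 < 1 - t ^ q := base_pos hq0 ht0.le ht1
  have hquot : (-1 : ℝ)/p < -1/q := by
    rw [neg_div, neg_div, neg_lt_neg_iff]
    exact one_div_lt_one_div_of_lt hp hpq
  calc fB q t = (1 - t ^ q) ^ (-1/q) := rfl
    _ < (1 - t ^ p) ^ (-1/q) :=
        Real.rpow_lt_rpow_of_neg h1 (by linarith) (div_neg_of_neg_of_pos (by norm_num) hq0)
    _ < (1 - t ^ p) ^ (-1/p) :=
        Real.rpow_lt_rpow_of_exponent_gt h1 (by nlinarith [Real.rpow_pos_of_pos ht0 p]) hquot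

noncomputable def phi (p q t : ℝ) : ℝ :=
  (1/q) * Real.log (1 - t ^ q) - (1/p) * Real.log (1 - t ^ p)

lemma fB_eq_exp {p t : ℝ} (hp : 0 < p) (ht0 : 0 ≤ t) (ht1 : t < 1) :
    fB p t = Real.exp (Real.log (1 - t ^ p) * (-1/p)) :=
  Real.rpow_def_of_pos (base_pos hp ht0 ht1) _

lemma fB_ratio {p q t : ℝ} (hp : 0 < p) (hq : 0 < q) (ht0 : 0 ≤ t) (ht1 : t < 1) :
    fB q t = Real.exp (-(phi p q t)) * fB p t := by
  rw [fB_eq_exp hp ht0 ht1, fB_eq_exp hq ht0 ht1, ← Real.exp_add]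
  congr 1
  unfold phi
  ring

lemma log_term_hasDeriv {p t : ℝ} (hp : 1 ≤ p) (ht0 : 0 < t) (ht1 : t < 1) :
    HasDerivAt (fun t => (1/p) * Real.log (1 - t ^ p))
      ((1/p) * (-(p * t ^ (p-1)) / (1 - t ^ p))) t := by
  have hp0 : 0 < p := lt_of_lt_of_le one_pos hp
  have h1 : HasDerivAt (fun t : ℝ => t ^ p) (p * t ^ (p-1)) t :=
    Real.hasDerivAt_rpow_const (Or.inl ht0.ne')
  have h2 : HasDerivAt (fun t : ℝ => 1 - t ^ p) (-(p * t ^ (p-1))) t := h1.const_sub 1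
  exact (h2.log (base_pos hp0 ht0.le ht1).ne').const_mul (1/p)

lemma phi_hasDeriv {p q t : ℝ} (hp : 1 ≤ p) (hq : 1 ≤ q) (ht0 : 0 < t) (ht1 : t < 1) :
    HasDerivAt (phi p q)
      ((1/q) * (-(q * t ^ (q-1)) / (1 - t ^ q)) - (1/p) * (-(p * t ^ (p-1)) / (1 - t ^ p))) t :=
  (log_term_hasDeriv hq ht0 ht1).sub (log_term_hasDeriv hp ht0 ht1)

lemma phi_deriv_pos {p q t : ℝ} (hp : 1 ≤ p) (hpq : p < q) (ht0 : 0 < t) (ht1 : t < 1) :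
    0 < (1/q) * (-(q * t ^ (q-1)) / (1 - t ^ q)) - (1/p) * (-(p * t ^ (p-1)) / (1 - t ^ p)) := by
  have hp0 : 0 < p := lt_of_lt_of_le one_pos hp
  have hq0 : 0 < q := lt_trans hp0 hpq
  have h1 : 0 < 1 - t ^ p := base_pos hp0 ht0.le ht1
  have h2 : 0 < 1 - t ^ q := base_pos hq0 ht0.le ht1
  have e1 : (1/q) * (-(q * t ^ (q-1)) / (1 - t ^ q)) = -(t ^ (q-1) / (1 - t ^ q)) := by
    field_simp
  have e2 : (1/p) * (-(p * t ^ (p-1)) / (1 - t ^ p)) = -(t ^ (p-1) / (1 - t ^ p)) := by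
    field_simp
  rw [e1, e2]
  have hnum : t ^ (q-1) < t ^ (p-1) :=
    Real.rpow_lt_rpow_of_exponent_gt ht0 ht1 (by linarith)
  have htq : t ^ q < t ^ p := Real.rpow_lt_rpow_of_exponent_gt ht0 ht1 hpq
  have hpos : 0 < t ^ (q-1) := Real.rpow_pos_of_pos ht0 _
  have : t ^ (q-1) / (1 - t ^ q) < t ^ (p-1) / (1 - t ^ p) := by
    calc t ^ (q-1) / (1 - t ^ q) ≤ t ^ (q-1) / (1 - t ^ p) := by
          gcongr
      _ < t ^ (p-1) / (1 - t ^ p) := by gcongr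
  linarith

lemma phi_strictMono {p q : ℝ} (hp : 1 ≤ p) (hpq : p < q) :
    StrictMonoOn (phi p q) (Ico 0 1) := by
  have hp0 : 0 < p := lt_of_lt_of_le one_pos hp
  have hq0 : 0 < q := lt_trans hp0 hpq
  apply strictMonoOn_of_deriv_pos (convex_Ico 0 1)
  · apply ContinuousOn.sub
    · apply ContinuousOn.mul continuousOn_const
      apply ContinuousOn.log (continuous_const.sub (cont_rpow hq0)).continuousOn
      exact fun t ht => (base_pos hq0 ht.1 ht.2).ne'
    · apply ContinuousOn.mul continuousOn_const
      apply ContinuousOn.log (continuous_const.sub (cont_rpow hp0)).continuousOn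
      exact fun t ht => (base_pos hp0 ht.1 ht.2).ne'
  · intro t ht
    rw [interior_Ico] at ht
    rw [(phi_hasDeriv hp (by linarith) ht.1 ht.2).deriv]
    exact phi_deriv_pos hp hpq ht.1 ht.2

lemma rpow_image {p : ℝ} (hp : 0 < p) : (fun t : ℝ => t ^ p) '' Ioo 0 1 = Ioo 0 1 := by
  ext u
  constructor
  · rintro ⟨t, ⟨ht0, ht1⟩, rfl⟩
    exact ⟨Real.rpow_pos_of_pos ht0 p, Real.rpow_lt_one ht0.le ht1 hp⟩
  · rintro ⟨hu0, hu1⟩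
    refine ⟨u ^ (1/p), ⟨Real.rpow_pos_of_pos hu0 _, Real.rpow_lt_one hu0.le hu1 (by positivity)⟩, ?_⟩
    show (u ^ (1/p)) ^ p = u
    rw [← Real.rpow_mul hu0.le, one_div_mul_cancel hp.ne', Real.rpow_one]

lemma rpow_injOn {p : ℝ} (hp : 0 < p) : InjOn (fun t : ℝ => t ^ p) (Ioo 0 1) := by
  have hsm : StrictMonoOn (fun t : ℝ => t ^ p) (Ici 0) :=
    fun a ha b _ h => Real.rpow_lt_rpow ha h hp
  exact hsm.injOn.mono (fun x hx => hx.1.le)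

lemma integral_fB {p : ℝ} (hp : 1 < p) :
    ∫ t in (0:ℝ)..1, fB p t = π / (p * Real.sin (π / p)) := by
  have hp0 : 0 < p := lt_trans one_pos hp
  set g : ℝ → ℝ := fun u => (1/p) * (u ^ (1/p - 1) * (1 - u) ^ (-1/p)) with hg
  have hderiv : ∀ x ∈ Ioo (0:ℝ) 1,
      HasDerivWithinAt (fun t : ℝ => t ^ p) (p * x ^ (p-1)) (Ioo 0 1) x :=
    fun x hx => (Real.hasDerivAt_rpow_const (Or.inl hx.1.ne')).hasDerivWithinAt
  have hcv := integral_image_eq_integral_abs_deriv_smul measurableSet_Ioo hderiv (rpow_injOn hp0) g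
  rw [rpow_image hp0] at hcv
  have heq : EqOn (fun x => |p * x ^ (p-1)| • g (x ^ p)) (fB p) (Ioo 0 1) := by
    intro x hx
    have hx0 := hx.1
    have hxp : (0:ℝ) < x ^ (p-1) := Real.rpow_pos_of_pos hx0 _
    show |p * x ^ (p-1)| • g (x ^ p) = fB p x
    rw [smul_eq_mul, abs_of_pos (by positivity)]
    have h1 : (x ^ p) ^ (1/p - 1) = x ^ (1 - p) := by
      rw [← Real.rpow_mul hx0.le]
      congr 1
      field_simp
    have h2 : x ^ (p-1) * x ^ (1-p) = 1 := by
      rw [← Real.rpow_add hx0]; norm_num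
    simp only [hg, h1]
    unfold fB
    have : p * x ^ (p-1) * ((1/p) * (x ^ (1-p) * (1 - x ^ p) ^ (-1/p)))
        = (p * (1/p)) * ((x ^ (p-1) * x ^ (1-p)) * (1 - x ^ p) ^ (-1/p)) := by ring
    rw [this, h2, mul_one_div_cancel hp0.ne', one_mul, one_mul]
  rw [setIntegral_congr_fun measurableSet_Ioo heq] at hcv
  -- hcv : ∫ u in Ioo 0 1, g u = ∫ x in Ioo 0 1, fB p x
  have h01 : (∫ t in (0:ℝ)..1, fB p t) = ∫ t in Ioo (0:ℝ) 1, fB p t := by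
    rw [intervalIntegral.integral_of_le zero_le_one, integral_Ioc_eq_integral_Ioo]
  have hgsplit : (∫ u in Ioo (0:ℝ) 1, g u)
      = (1/p) * ∫ u in (0:ℝ)..1, u ^ (1/p - 1) * (1 - u) ^ (-1/p) := by
    rw [intervalIntegral.integral_of_le zero_le_one, integral_Ioc_eq_integral_Ioo]
    simp only [hg]
    rw [integral_const_mul]
  have h1p : (0:ℝ) < 1/p := by positivity
  have h1p' : (0:ℝ) < 1 - 1/p := by
    have : 1/p < 1 := by rw [div_lt_one hp0]; exact hp
    linarith
  have hbeta : (∫ u in (0:ℝ)..1, u ^ (1/p - 1) * (1 - u) ^ (-1/p)) = π / Real.sin (π / p) := by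
    have hB := Complex.Gamma_mul_Gamma_eq_betaIntegral
      (s := ((1/p : ℝ) : ℂ)) (t := ((1 - 1/p : ℝ) : ℂ)) (by simpa using h1p) (by simpa using h1p')
    have hsum : ((1/p : ℝ) : ℂ) + ((1 - 1/p : ℝ) : ℂ) = 1 := by push_cast; ring
    rw [hsum, Complex.Gamma_one, one_mul] at hB
    have hrefl := Complex.Gamma_mul_Gamma_one_sub ((1/p : ℝ) : ℂ)
    have hone : (1 : ℂ) - ((1/p:ℝ) : ℂ) = ((1 - 1/p : ℝ) : ℂ) := by push_cast; ring
    rw [hone] at hrefl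
    have hBeq : Complex.betaIntegral ((1/p:ℝ):ℂ) ((1 - 1/p:ℝ):ℂ)
        = ↑π / Complex.sin (↑π * ((1/p:ℝ):ℂ)) := by rw [← hB]; exact hrefl
    have hre : Complex.betaIntegral ((1/p:ℝ):ℂ) ((1 - 1/p:ℝ):ℂ)
        = ((∫ u in (0:ℝ)..1, u ^ (1/p - 1) * (1 - u) ^ (-1/p) : ℝ) : ℂ) := by
      rw [Complex.betaIntegral, ← intervalIntegral.integral_ofReal]
      apply intervalIntegral.integral_congr
      intro x hx
      rw [uIcc_of_le zero_le_one] at hx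
      dsimp only
      rw [Complex.ofReal_mul, Complex.ofReal_cpow hx.1, Complex.ofReal_cpow (by linarith [hx.2] : (0:ℝ) ≤ 1 - x)]
      push_cast
      ring_nf
    rw [hre] at hBeq
    have hsin : (↑π * ((1/p:ℝ):ℂ)) = ((π / p : ℝ) : ℂ) := by push_cast; ring
    rw [hsin, ← Complex.ofReal_sin, ← Complex.ofReal_div] at hBeq
    exact_mod_cast hBeq
  rw [h01, ← hcv, hgsplit, hbeta]
  field_simp

end Aux16

open Aux16 in
theorem stmt_16 (p q y : ℝ) (hp : 1 < p) (hpq : p < q) (hy0 : 0 < y) (hy1 : y < 1) :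
    1 < Ip q y / Ip p y ∧ Ip q y / Ip p y < pip p / pip q := by
  have hq : 1 < q := lt_trans hp hpq
  have hp0 : 0 < p := lt_trans one_pos hp
  have hq0 : 0 < q := lt_trans one_pos hq
  have hip1 : IntervalIntegrable (fB p) volume 0 y := fB_intble hp0 le_rfl hy0.le hy1
  have hiq1 : IntervalIntegrable (fB q) volume 0 y := fB_intble hq0 le_rfl hy0.le hy1
  have hip2 : IntervalIntegrable (fB p) volume y 1 := fB_intble_one hp hy0.le hy1.le
  have hiq2 : IntervalIntegrable (fB q) volume y 1 := fB_intble_one hq hy0.le hy1.le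
  set A := ∫ t in (0:ℝ)..y, fB p t with hA
  set A' := ∫ t in (0:ℝ)..y, fB q t with hA'
  set B := ∫ t in y..(1:ℝ), fB p t with hB
  set B' := ∫ t in y..(1:ℝ), fB q t with hB'
  have hpipp : pip p = 2 * (A + B) := by
    rw [hA, hB, intervalIntegral.integral_add_adjacent_intervals hip1 hip2, integral_fB hp, pip]
    ring
  have hpipq : pip q = 2 * (A' + B') := by
    rw [hA', hB', intervalIntegral.integral_add_adjacent_intervals hiq1 hiq2, integral_fB hq, pip]
    ring
  have hApos : 0 < A := intervalIntegral.intervalIntegral_pos_of_pos_on hip1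
    (fun x hx => fB_pos hp0 hx.1.le (lt_trans hx.2 hy1)) hy0
  have hA'pos : 0 < A' := intervalIntegral.intervalIntegral_pos_of_pos_on hiq1
    (fun x hx => fB_pos hq0 hx.1.le (lt_trans hx.2 hy1)) hy0
  have hBpos : 0 < B := intervalIntegral.intervalIntegral_pos_of_pos_on hip2
    (fun x hx => fB_pos hp0 (le_trans hy0.le hx.1.le) hx.2) hy1
  have hB'nonneg : 0 ≤ B' := intervalIntegral.integral_nonneg hy1.le
    (fun u hu => fB_nonneg hq0 (le_trans hy0.le hu.1) hu.2)
  have hAA : A' < A := by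
    have h : 0 < ∫ t in (0:ℝ)..y, (fB p t - fB q t) :=
      intervalIntegral.intervalIntegral_pos_of_pos_on (hip1.sub hiq1)
        (fun x hx => sub_pos.mpr (fB_lt hp0 hpq hx.1 (lt_trans hx.2 hy1))) hy0
    rw [intervalIntegral.integral_sub hip1 hiq1] at h
    linarith
  set r := Real.exp (-(phi p q y)) with hr
  have hrpos : 0 < r := Real.exp_pos _
  have hmono := phi_strictMono hp.le hpq
  have hrA : r * A < A' := by
    have h : 0 < ∫ s in (0:ℝ)..y, (fB q s - r * fB p s) := by
      apply intervalIntegral.intervalIntegral_pos_of_pos_on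
        (hiq1.sub (hip1.const_mul r)) ?_ hy0
      intro s hs
      have hs1 : s < 1 := lt_trans hs.2 hy1
      have hphi : phi p q s < phi p q y := hmono ⟨hs.1.le, hs1⟩ ⟨hy0.le, hy1⟩ hs.2
      have heq : fB q s = Real.exp (-(phi p q s)) * fB p s := fB_ratio hp0 hq0 hs.1.le hs1
      rw [heq]
      have hfp := fB_pos hp0 hs.1.le hs1
      have hexp : r < Real.exp (-(phi p q s)) := by
        rw [hr]; exact Real.exp_lt_exp.mpr (by linarith)
      nlinarith
    rw [intervalIntegral.integral_sub hiq1 (hip1.const_mul r),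
        intervalIntegral.integral_const_mul] at h
    linarith
  have hrB : B' ≤ r * B := by
    have h : ∀ t ∈ Icc y 1, fB q t ≤ r * fB p t := by
      intro t ht
      rcases eq_or_lt_of_le ht.2 with h1 | h1
      · rw [h1, fB_one hq0, fB_one hp0]; simp
      · have ht0 : 0 ≤ t := le_trans hy0.le ht.1
        rw [fB_ratio hp0 hq0 ht0 h1]
        have hphi : phi p q y ≤ phi p q t :=
          hmono.monotoneOn ⟨hy0.le, hy1⟩ ⟨ht0, h1⟩ ht.1
        have hexp : Real.exp (-(phi p q t)) ≤ r := by
          rw [hr]; exact Real.exp_le_exp.mpr (by linarith)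
        exact mul_le_mul_of_nonneg_right hexp (fB_nonneg hp0 ht0 h1.le)
    calc B' ≤ ∫ t in y..(1:ℝ), r * fB p t :=
          intervalIntegral.integral_mono_on hy1.le hiq2 (hip2.const_mul r) h
      _ = r * B := intervalIntegral.integral_const_mul r (fB p)
  have hpippos : 0 < pip p := by rw [hpipp]; linarith
  have hpipqpos : 0 < pip q := by rw [hpipq]; linarith
  have hIp : Ip p y = 2 / pip p * A := by rw [hA]; rfl
  have hIq : Ip q y = 2 / pip q * A' := by rw [hA']; rfl
  have hratio : Ip q y / Ip p y = (pip p * A') / (pip q * A) := by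
    rw [hIp, hIq]
    field_simp
  constructor
  · rw [hratio, lt_div_iff₀ (by positivity)]
    rw [hpipp, hpipq]
    nlinarith [mul_le_mul_of_nonneg_right hrB hApos.le, mul_lt_mul_of_pos_right hrA hBpos]
  · rw [hratio, div_lt_div_iff₀ (by positivity) (by positivity)]
    nlinarith [mul_pos hpippos hpipqpos]
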